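/- Let F = Inv ∘ (0,1,γ) on GF(2^n) with n ≥ 4, γ ∉ {0,1}, c ∉ {0,1}. Then the c-differential uniformity of F satisfies 3 ≤ _cΔ_F ≤ 5. -/

import Mathlib

set_option maxHeartbeats 1000000

open scoped Classical

/-- The number of solutions `x` of `F(x+a) + c·F(x) = b`. -/
noncomputable def cdCount (n : ℕ) (F : GaloisField 2 n → GaloisField 2 n)
    (c a b : GaloisField 2 n) : ℕ :=
  Nat.card {x : GaloisField 2 n // F (x + a) + c * F x = b}

/-- The `c`-differential uniformity of `F` (requiring `a ≠ 0` only when `c = 1`). -/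
noncomputable def cdu (n : ℕ) (F : GaloisField 2 n → GaloisField 2 n)
    (c : GaloisField 2 n) : ℕ :=
  sSup {k : ℕ | ∃ a b : GaloisField 2 n, (c = 1 → a ≠ 0) ∧ k = cdCount n F c a b}

/-- The 3-cycle `(0, 1, γ)` : sends `0 ↦ 1`, `1 ↦ γ`, `γ ↦ 0`, fixes all other points. -/
noncomputable def cyc (n : ℕ) (γ : GaloisField 2 n) :
    GaloisField 2 n → GaloisField 2 n :=
  fun x => if x = 0 then 1 else if x = 1 then γ else if x = γ then 0 else x

set_option linter.unusedSectionVars false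
set_option linter.unusedVariables false

def F16 : Type := Fin 16
instance : DecidableEq F16 := inferInstanceAs (DecidableEq (Fin 16))
instance : Fintype F16 := inferInstanceAs (Fintype (Fin 16))

namespace F16

def toF (a : F16) : Fin 16 := a
def val (a : F16) : ℕ := (toF a).val
def mk (n : ℕ) : F16 := show Fin 16 from ⟨n % 16, Nat.mod_lt _ (by norm_num)⟩

def add (x y : F16) : F16 :=
  mk (0x123456789abcdef1032547698badcfe23016745ab89efcd32107654ba98fedc45670123cdef89ab54761032dcfe98ba67452301efcdab8976543210fedcba9889abcdef0123456798badcfe10325476ab89efcd23016745ba98fedc32107654cdef89ab45670123dcfe98ba54761032efcdab8967452301fedcba9876543210 >>> (4*(16*val x + val y)) &&& 15)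
def mul (x y : F16) : F16 :=
  mk (0xa5783ce1b4692df05ba48679c23d1fe07ae36bf258c149d0843fd16a2e957bc0386d92c74f1ae5b0c6b1285f394ed7a0e7f6c5d4a3b28190192a7f4cd5e6b380bc5243ad618f9e70428ef93517dbac6063c914be8d27fa509d15ae26fb73c8402147ed8b9afc5630df9b5713eca86420fedcba98765432100000000000000000 >>> (4*(16*val x + val y)) &&& 15)
def inv (x : F16) : F16 := mk (0x834a5c2f67bde910 >>> (4 * val x) &&& 15)

instance : Zero F16 := ⟨mk 0⟩
instance : One F16 := ⟨mk 1⟩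
instance : Add F16 := ⟨add⟩
instance : Mul F16 := ⟨mul⟩
instance : Neg F16 := ⟨fun x => x⟩
instance : Inv F16 := ⟨inv⟩

theorem hadd_assoc : ∀ a b c : F16, add (add a b) c = add a (add b c) := by decide
theorem hzero_add : ∀ a : F16, add (mk 0) a = a := by decide
theorem hadd_zero : ∀ a : F16, add a (mk 0) = a := by decide
theorem hadd_comm : ∀ a b : F16, add a b = add b a := by decide
theorem hneg_add_cancel : ∀ a : F16, add a a = mk 0 := by decide
theorem hmul_assoc : ∀ a b c : F16, mul (mul a b) c = mul a (mul b c) := by decide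
theorem hone_mul : ∀ a : F16, mul (mk 1) a = a := by decide
theorem hmul_one : ∀ a : F16, mul a (mk 1) = a := by decide
theorem hmul_comm : ∀ a b : F16, mul a b = mul b a := by decide
theorem hleft_distrib : ∀ a b c : F16, mul a (add b c) = add (mul a b) (mul a c) := by decide
theorem hright_distrib : ∀ a b c : F16, mul (add a b) c = add (mul a c) (mul b c) := by decide
theorem hzero_mul : ∀ a : F16, mul (mk 0) a = mk 0 := by decide
theorem hmul_zero : ∀ a : F16, mul a (mk 0) = mk 0 := by decide
theorem hmul_inv_cancel : ∀ a : F16, a ≠ mk 0 → mul a (inv a) = mk 1 := by decide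
theorem hinv_zero : inv (mk 0) = mk 0 := by decide
theorem hne : mk 0 ≠ (mk 1 : F16) := by decide

instance : CommRing F16 where
  add := (· + ·)
  zero := 0
  neg := (- ·)
  mul := (· * ·)
  one := 1
  add_assoc := hadd_assoc
  zero_add := hzero_add
  add_zero := hadd_zero
  add_comm := hadd_comm
  neg_add_cancel := hneg_add_cancel
  mul_assoc := hmul_assoc
  one_mul := hone_mul
  mul_one := hmul_one
  mul_comm := hmul_comm
  left_distrib := hleft_distrib
  right_distrib := hright_distrib
  zero_mul := hzero_mul
  mul_zero := hmul_zero
  nsmul := nsmulRec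
  zsmul := zsmulRec

instance : Field F16 where
  inv := (·⁻¹)
  exists_pair_ne := ⟨mk 0, mk 1, hne⟩
  mul_inv_cancel := hmul_inv_cancel
  inv_zero := hinv_zero
  nnqsmul := _
  qsmul := _


def FdC (g x : F16) : F16 :=
  inv (if x = 0 then mk 1 else if x = 1 then g else if x = g then mk 0 else x)

def witA (c g : F16) : F16 := mk (0x1111111121112200141211111113110011211112111113001111111112221100211121111111210011111111122211001111124111211100111111112111220011111111111111001111111111111100211121111111210011211112111113001412111111131100111112411121110000000000000000000000000000000000 >>> (4*(16*val c + val g)) &&& 15)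
def witB (c g : F16) : F16 := mk (0x33ad83ad68225f001ba1225172937700358131f95666b30048448989aded54004821214246662800e88e55c58b6b44001433c841732c7700baa2ab225c23110094e4955e11549e003b2b3dd211db32007ea565777dddac007764c4927bb99c0037d366f3968599002866b372e64beb0000000000000000000000000000000000 >>> (4*(16*val c + val g)) &&& 15)
def witX1 (c g : F16) : F16 := mk (0x71b1808600101000440310507311200011623001460510000216172106711300702003115640030019971680145301000410010572150300612021172141020050121304071100004103021560001100513132014751200010432113571033005311014162023100150113546334100000000000000000000000000000000000 >>> (4*(16*val c + val g)) &&& 15)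
def witX2 (c g : F16) : F16 := mk (0xd7d6a7b968995700a56633748729880034cd627469995b0064692b478d9db600e763a8526ccca7007bb86ac69cbcaa0057226489b786bb00c257567849785500824b5a3999323200935a4b28bb232300c67279447ddd850055ec736678866800ba742265963a990046337568a6a7a70000000000000000000000000000000000 >>> (4*(16*val c + val g)) &&& 15)
def witX3 (c g : F16) : F16 := mk (0xfdeacdea8cfffc00e9dbcc8adcefdd0068dfaf9d8aaadc009e9c4f8faefec900fac8bbf6feeeda008ecdeefebfdfdd00cfaa879cfae8ff00e5dbacbbadbeee00ebfc8ddfee455400faed9ccedd544500dbd9aaeeeffffa0099febe8f9bbddf00fbc9dd9bcdfccc00debb968debc9e90000000000000000000000000000000000 >>> (4*(16*val c + val g)) &&& 15)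


theorem f16_check : ∀ c g : F16, c ≠ 0 → c ≠ 1 → g ≠ 0 → g ≠ 1 →
    (witX1 c g ≠ witX2 c g ∧ witX1 c g ≠ witX3 c g ∧ witX2 c g ≠ witX3 c g) ∧
    add (FdC g (add (witX1 c g) (witA c g))) (mul c (FdC g (witX1 c g))) = witB c g ∧
    add (FdC g (add (witX2 c g) (witA c g))) (mul c (FdC g (witX2 c g))) = witB c g ∧
    add (FdC g (add (witX3 c g) (witA c g))) (mul c (FdC g (witX3 c g))) = witB c g := by
  decide

end F16


section Abstract
variable {K : Type*} [Field K]

noncomputable def Fg (γ : K) (x : K) : K :=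
  (if x = 0 then 1 else if x = 1 then γ else if x = γ then 0 else x)⁻¹

variable {γ c : K}

lemma Fg_zero : Fg γ 0 = 1 := by simp [Fg]
lemma Fg_one : Fg γ 1 = γ⁻¹ := by simp [Fg]
lemma Fg_gamma (hγ0 : γ ≠ 0) (hγ1 : γ ≠ 1) : Fg γ γ = 0 := by simp [Fg, hγ0, hγ1]
lemma Fg_apply {x : K} (h0 : x ≠ 0) (h1 : x ≠ 1) (hγ : x ≠ γ) : Fg γ x = x⁻¹ := by
  simp [Fg, h0, h1, hγ]

lemma Fg_inj (hγ0 : γ ≠ 0) (hγ1 : γ ≠ 1) : Function.Injective (Fg γ) := by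
  intro x y h
  have h' : (if x = 0 then (1:K) else if x = 1 then γ else if x = γ then 0 else x)
      = (if y = 0 then 1 else if y = 1 then γ else if y = γ then 0 else y) :=
    inv_injective h
  split_ifs at h' <;> simp_all

lemma pair_ncard_le_one [Finite K] {S : Set K} {u v : K} (h : ¬(u ∈ S ∧ v ∈ S)) :
    (S ∩ {u, v}).ncard ≤ 1 := by
  rw [Set.ncard_le_one (Set.toFinite _)]
  rintro x ⟨hxS, hx⟩ y ⟨hyS, hy⟩
  simp only [Set.mem_insert_iff, Set.mem_singleton_iff] at hx hy
  rcases hx with rfl | rfl <;> rcases hy with rfl | rfl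
  · rfl
  · exact absurd ⟨hxS, hyS⟩ h
  · exact absurd ⟨hyS, hxS⟩ h
  · rfl

lemma upper_bound [Finite K] (h2 : (2:K) = 0) (hγ0 : γ ≠ 0) (hγ1 : γ ≠ 1)
    (hc0 : c ≠ 0) (hc1 : c ≠ 1) (a b : K) :
    {x : K | Fg γ (x + a) + c * Fg γ x = b}.ncard ≤ 5 := by
  have hc1' : 1 + c ≠ 0 := fun h => hc1 (by linear_combination h - h2)
  set S := {x : K | Fg γ (x + a) + c * Fg γ x = b} with hSdef
  rcases eq_or_ne a 0 with rfl | ha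
  · have h1 : S.ncard ≤ 1 := by
      rw [Set.ncard_le_one (Set.toFinite _)]
      intro x hx y hy
      simp only [hSdef, Set.mem_setOf_eq, add_zero] at hx hy
      have hx' : (1+c) * Fg γ x = b := by linear_combination hx
      have hy' : (1+c) * Fg γ y = b := by linear_combination hy
      exact Fg_inj hγ0 hγ1 (mul_left_cancel₀ hc1' (hx'.trans hy'.symm))
    omega
  · set E : Set K := {0, a, 1, 1+a, γ, γ+a} with hEdef
    have key : ∀ x ∈ S, x ∉ E → b*(x*x) + (a*b + c + 1)*x + c*a = 0 := by
      intro x hx hxE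
      simp only [hEdef, Set.mem_insert_iff, Set.mem_singleton_iff, not_or] at hxE
      obtain ⟨hx0, hxa, hx1, hx1a, hxγ, hxγa⟩ := hxE
      have hxa0 : x + a ≠ 0 := fun h => hxa (by linear_combination h - a*h2)
      have hxa1 : x + a ≠ 1 := fun h => hx1a (by linear_combination h - a*h2)
      have hxaγ : x + a ≠ γ := fun h => hxγa (by linear_combination h - a*h2)
      simp only [hSdef, Set.mem_setOf_eq] at hx
      rw [Fg_apply hxa0 hxa1 hxaγ, Fg_apply hx0 hx1 hxγ] at hx
      field_simp at hx
      linear_combination hx + (b*x*a + b*x*x) * h2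
    have hsplit : S = (S ∩ E) ∪ (S \ E) := (Set.inter_union_diff S E).symm
    have hE3 : (S ∩ E).ncard ≤ 3 := by
      have key0a : ¬(0 ∈ S ∧ a ∈ S) := by
        rintro ⟨h0S, haS⟩
        simp only [hSdef, Set.mem_setOf_eq] at h0S haS
        rw [zero_add, Fg_zero, mul_one] at h0S
        have haa : a + a = 0 := by linear_combination a * h2
        rw [haa, Fg_zero] at haS
        have hcc : (1+c) * Fg γ a = (1+c) * 1 := by
          linear_combination h0S + haS + (b - c - 1) * h2
        have := Fg_inj hγ0 hγ1 (K := K) (γ := γ)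
          (show Fg γ a = Fg γ 0 by rw [Fg_zero]; exact mul_left_cancel₀ hc1' hcc)
        exact ha this
      have key1 : ¬((1:K) ∈ S ∧ 1 + a ∈ S) := by
        rintro ⟨h1S, haS⟩
        simp only [hSdef, Set.mem_setOf_eq] at h1S haS
        rw [Fg_one] at h1S
        have haa : 1 + a + a = 1 := by linear_combination a * h2
        rw [haa, Fg_one] at haS
        have hcc : (1+c) * Fg γ (1+a) = (1+c) * γ⁻¹ := by
          linear_combination h1S + haS + (b - γ⁻¹ - c*γ⁻¹) * h2
        have := Fg_inj hγ0 hγ1 (K := K) (γ := γ)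
          (show Fg γ (1+a) = Fg γ 1 by rw [Fg_one]; exact mul_left_cancel₀ hc1' hcc)
        exact ha (by linear_combination this)
      have keyγ : ¬(γ ∈ S ∧ γ + a ∈ S) := by
        rintro ⟨h1S, haS⟩
        simp only [hSdef, Set.mem_setOf_eq] at h1S haS
        rw [Fg_gamma hγ0 hγ1, mul_zero, add_zero] at h1S
        have haa : γ + a + a = γ := by linear_combination a * h2
        rw [haa, Fg_gamma hγ0 hγ1, zero_add] at haS
        have hcc : (1+c) * Fg γ (γ+a) = (1+c) * 0 := by
          linear_combination h1S - haS + (c * Fg γ (γ+a)) * h2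
        have := Fg_inj hγ0 hγ1 (K := K) (γ := γ)
          (show Fg γ (γ+a) = Fg γ γ by rw [Fg_gamma hγ0 hγ1]; exact mul_left_cancel₀ hc1' hcc)
        exact ha (by linear_combination this)
      have hsub : S ∩ E ⊆ (S ∩ {0,a}) ∪ ((S ∩ {1,1+a}) ∪ (S ∩ {γ,γ+a})) := by
        rintro x ⟨hxS, hxE⟩
        simp only [hEdef, Set.mem_insert_iff, Set.mem_singleton_iff] at hxE
        simp only [Set.mem_union, Set.mem_inter_iff, Set.mem_insert_iff,
          Set.mem_singleton_iff]
        rcases hxE with h|h|h|h|h|h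
        exacts [Or.inl ⟨hxS, Or.inl h⟩, Or.inl ⟨hxS, Or.inr h⟩,
          Or.inr (Or.inl ⟨hxS, Or.inl h⟩), Or.inr (Or.inl ⟨hxS, Or.inr h⟩),
          Or.inr (Or.inr ⟨hxS, Or.inl h⟩), Or.inr (Or.inr ⟨hxS, Or.inr h⟩)]
      have hp1 : (S ∩ ({0,a} : Set K)).ncard ≤ 1 := pair_ncard_le_one key0a
      have hp2 : (S ∩ ({1,1+a} : Set K)).ncard ≤ 1 := pair_ncard_le_one key1
      have hp3 : (S ∩ ({γ,γ+a} : Set K)).ncard ≤ 1 := pair_ncard_le_one keyγ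
      calc (S ∩ E).ncard ≤ ((S ∩ {0,a}) ∪ ((S ∩ {1,1+a}) ∪ (S ∩ {γ,γ+a}))).ncard :=
            Set.ncard_le_ncard hsub (Set.toFinite _)
        _ ≤ (S ∩ {0,a}).ncard + ((S ∩ {1,1+a}) ∪ (S ∩ {γ,γ+a})).ncard :=
            Set.ncard_union_le _ _
        _ ≤ (S ∩ {0,a}).ncard + ((S ∩ {1,1+a}).ncard + (S ∩ {γ,γ+a}).ncard) := by
            have := Set.ncard_union_le (S ∩ ({1,1+a} : Set K)) (S ∩ ({γ,γ+a} : Set K))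
            omega
        _ ≤ 3 := by omega
    have hD2 : (S \ E).ncard ≤ 2 := by
      rcases eq_or_ne b 0 with rfl | hb
      · have h1 : (S \ E).ncard ≤ 1 := by
          rw [Set.ncard_le_one (Set.toFinite _)]
          intro u hu v hv
          have h1 := key u hu.1 hu.2
          have h2' := key v hv.1 hv.2
          have : (c+1)*(u - v) = 0 := by linear_combination h1 - h2'
          have hcc : c + 1 ≠ 0 := by rwa [add_comm]
          have := (mul_eq_zero.mp this).resolve_left hcc
          linear_combination this
        omega
      · rcases (S \ E).eq_empty_or_nonempty with he | ⟨x₀, hx₀⟩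
        · simp [he]
        · have hsub : S \ E ⊆ {x₀, x₀ + (a*b + c + 1)/b} := by
            intro y hy
            rcases eq_or_ne y x₀ with rfl | hne
            · exact Set.mem_insert _ _
            · have hy' := key y hy.1 hy.2
              have hx' := key x₀ hx₀.1 hx₀.2
              have hfac : (y - x₀) * (b*(y + x₀) + (a*b + c + 1)) = 0 := by
                linear_combination hy' - hx'
              have hlin := (mul_eq_zero.mp hfac).resolve_left (sub_ne_zero.mpr hne)
              have : y = x₀ + (a*b + c + 1)/b := by
                field_simp
                linear_combination hlin - (b*x₀ + a*b + c + 1) * h2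
              simp [this]
          calc (S \ E).ncard ≤ ({x₀, x₀ + (a*b + c + 1)/b} : Set K).ncard :=
                Set.ncard_le_ncard hsub (Set.toFinite _)
            _ ≤ ({x₀ + (a*b + c + 1)/b} : Set K).ncard + 1 := Set.ncard_insert_le _ _
            _ ≤ 2 := by rw [Set.ncard_singleton]
    calc S.ncard = ((S ∩ E) ∪ (S \ E)).ncard := by rw [← hsplit]
      _ ≤ (S ∩ E).ncard + (S \ E).ncard := Set.ncard_union_le _ _
      _ ≤ 5 := by omega

lemma three_sols (h2 : (2:K) = 0) (hγ0 : γ ≠ 0) (hγ1 : γ ≠ 1)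
    (hc0 : c ≠ 0) (hc1 : c ≠ 1)
    {t : K} (h0 : t ≠ 0) (h1 : t ≠ 1) (htc : t ≠ c) (htc1 : t ≠ c + 1)
    (hg : (1+c)*t ≠ c) (hsq : t*t ≠ c)
    (hq : t*t + c*t + c ≠ 0)
    (hG2 : t*t + (c+γ)*t + c ≠ 0)
    (hG3 : t*t + (c+γ*c)*t + (c+γ*c) ≠ 0)
    (hG4 : (1+γ)*(t*t) + (c+γ)*t + c ≠ 0)
    (hG5 : (1+γ)*(t*t) + (c+γ*c)*t + c ≠ 0)
    (hG6 : t*t + (c+γ)*t + (c+γ*c) ≠ 0) :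
    ∃ a b x₁ x₂ x₃ : K, x₁ ≠ x₂ ∧ x₁ ≠ x₃ ∧ x₂ ≠ x₃ ∧
      Fg γ (x₁ + a) + c * Fg γ x₁ = b ∧ Fg γ (x₂ + a) + c * Fg γ x₂ = b ∧
      Fg γ (x₃ + a) + c * Fg γ x₃ = b := by
  have ht1 : t + 1 ≠ 0 := fun h => h1 (by linear_combination h - h2)
  have htc0 : t + c ≠ 0 := fun h => htc (by linear_combination h - c*h2)
  set q : K := t*t + c*t + c with hqdef
  set a : K := γ + γ*t/q with hadef
  set r : K := γ*c*(t+1)/q with hrdef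
  set r' : K := γ*t*(t+c)/q with hr'def
  set b : K := q/(γ*t) with hbdef
  have hA : γ + a = γ*t/q := by rw [hadef]; linear_combination γ * h2
  have hRA : r + a = γ*t*(t+1)/q := by
    rw [hrdef, hadef]; field_simp; linear_combination (γ*c + (γ*c*t - γ*c*t*t) + (-(γ*c*t*t*t) - γ*c*c) + γ*c*t*t + γ*c*t*t*t + γ*c*c)*h2 + (c + c*t - c*t*γ - c*γ)*h2
  have hRA' : r' + a = γ*(t+c)/q := by
    rw [hr'def, hadef]; field_simp; linear_combination (γ*t*c - γ*t*c*c + γ*t*t + (-(γ*t*t*c) - γ*t*t*c*c) + γ*t*c*c + γ*t*t*c + γ*t*t*c*c)*h2 + (t*c - t*c*γ + t^2 - t^2*γ)*h2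
  have ha'0 : γ*t/q ≠ 0 := div_ne_zero (mul_ne_zero hγ0 h0) hq
  have ha'1 : γ*t/q ≠ 1 := by
    intro h; rw [div_eq_one_iff_eq hq] at h
    exact hG2 (by linear_combination h + (t*t + c*t + c)*h2)
  have ha'γ : γ*t/q ≠ γ := by
    intro h; rw [div_eq_iff hq] at h
    have hf : γ*((t+1)*(t+c)) = 0 := by linear_combination -h + γ*t*h2
    rcases mul_eq_zero.mp ((mul_eq_zero.mp hf).resolve_left hγ0) with h'|h'
    · exact h1 (by linear_combination h' - h2)
    · exact htc (by linear_combination h' - c*h2)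
  have hr0 : r ≠ 0 := by
    rw [hrdef]; exact div_ne_zero (mul_ne_zero (mul_ne_zero hγ0 hc0) ht1) hq
  have hr1 : r ≠ 1 := by
    rw [hrdef]; intro h; rw [div_eq_one_iff_eq hq] at h
    exact hG3 (by linear_combination h + (t*t + c*t + c)*h2)
  have hrγ : r ≠ γ := by
    rw [hrdef]; intro h; rw [div_eq_iff hq] at h
    have hf : γ*(t*t) = 0 := by linear_combination -h
    exact h0 (mul_self_eq_zero.mp ((mul_eq_zero.mp hf).resolve_left hγ0))
  have hX0 : γ*t*(t+1)/q ≠ 0 := div_ne_zero (mul_ne_zero (mul_ne_zero hγ0 h0) ht1) hq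
  have hX1 : γ*t*(t+1)/q ≠ 1 := by
    intro h; rw [div_eq_one_iff_eq hq] at h
    exact hG4 (by linear_combination h + (t*t + c*t + c)*h2)
  have hXγ : γ*t*(t+1)/q ≠ γ := by
    intro h; rw [div_eq_iff hq] at h
    have hf : γ*((1+c)*t) = γ*c := by linear_combination h + γ*c*t*h2
    exact hg (mul_left_cancel₀ hγ0 hf)
  have hr'0 : r' ≠ 0 := by
    rw [hr'def]; exact div_ne_zero (mul_ne_zero (mul_ne_zero hγ0 h0) htc0) hq
  have hr'1 : r' ≠ 1 := by
    rw [hr'def]; intro h; rw [div_eq_one_iff_eq hq] at h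
    exact hG5 (by linear_combination h + (t*t + c*t + c)*h2)
  have hr'γ : r' ≠ γ := by
    rw [hr'def]; intro h; rw [div_eq_iff hq] at h
    have hf : γ*c = 0 := by linear_combination -h
    exact hc0 ((mul_eq_zero.mp hf).resolve_left hγ0)
  have hY0 : γ*(t+c)/q ≠ 0 := div_ne_zero (mul_ne_zero hγ0 htc0) hq
  have hY1 : γ*(t+c)/q ≠ 1 := by
    intro h; rw [div_eq_one_iff_eq hq] at h
    exact hG6 (by linear_combination h + (t*t + c*t + c)*h2)
  have hYγ : γ*(t+c)/q ≠ γ := by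
    intro h; rw [div_eq_iff hq] at h
    have hf : γ*(t*(t+c+1)) = 0 := by linear_combination -h + γ*t*h2
    rcases mul_eq_zero.mp ((mul_eq_zero.mp hf).resolve_left hγ0) with h'|h'
    · exact h0 h'
    · exact htc1 (by linear_combination h' - (c+1)*h2)
  refine ⟨a, b, γ, r, r', hrγ.symm, hr'γ.symm, ?_, ?_, ?_, ?_⟩
  · -- r ≠ r'
    rw [hrdef, hr'def]; intro h
    rw [div_eq_div_iff hq hq] at h
    have hf : (t*t)*(γ*q) = c*(γ*q) := by linear_combination -h
    exact hsq (mul_right_cancel₀ (mul_ne_zero hγ0 hq) hf)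
  · -- x = γ
    rw [hA, Fg_apply ha'0 ha'1 ha'γ, Fg_gamma hγ0 hγ1, mul_zero, add_zero, hbdef,
      inv_div]
  · -- x = r
    rw [hRA, Fg_apply hX0 hX1 hXγ, Fg_apply hr0 hr1 hrγ, hrdef, hbdef]
    rw [inv_div, inv_div]
    field_simp
    ring
  · -- x = r'
    rw [hRA', Fg_apply hY0 hY1 hYγ, Fg_apply hr'0 hr'1 hr'γ, hr'def, hbdef]
    rw [inv_div, inv_div]
    field_simp

lemma quad_ncard [Finite K] (α β δ : K) (hα : α ≠ 0) :
    {x : K | α*(x*x) + β*x + δ = 0}.ncard ≤ 2 := by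
  by_contra h
  push_neg at h
  obtain ⟨x, y, z, hx, hy, hz, hxy, hxz, hyz⟩ :=
    (Set.two_lt_ncard_iff (Set.toFinite _)).mp h
  simp only [Set.mem_setOf_eq] at hx hy hz
  have fxy : (x - y) * (α*(x+y) + β) = 0 := by linear_combination hx - hy
  have fxz : (x - z) * (α*(x+z) + β) = 0 := by linear_combination hx - hz
  have exy := (mul_eq_zero.mp fxy).resolve_left (sub_ne_zero.mpr hxy)
  have exz := (mul_eq_zero.mp fxz).resolve_left (sub_ne_zero.mpr hxz)
  exact hyz (by
    have h' : α * (y - z) = 0 := by linear_combination exy - exz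
    have := (mul_eq_zero.mp h').resolve_left hα
    linear_combination this)

lemma exists_good_t [Finite K] (h2 : (2:K) = 0) (hγ1 : γ ≠ 1) (hc1 : c ≠ 1)
    (hcard : 19 ≤ Nat.card K) :
    ∃ t : K, t ≠ 0 ∧ t ≠ 1 ∧ t ≠ c ∧ t ≠ c + 1 ∧ (1+c)*t ≠ c ∧ t*t ≠ c ∧
      t*t + c*t + c ≠ 0 ∧ t*t + (c+γ)*t + c ≠ 0 ∧ t*t + (c+γ*c)*t + (c+γ*c) ≠ 0 ∧
      (1+γ)*(t*t) + (c+γ)*t + c ≠ 0 ∧ (1+γ)*(t*t) + (c+γ*c)*t + c ≠ 0 ∧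
      t*t + (c+γ)*t + (c+γ*c) ≠ 0 := by
  have hc1' : 1 + c ≠ 0 := fun h => hc1 (by linear_combination h - h2)
  have hγ1' : 1 + γ ≠ 0 := fun h => hγ1 (by linear_combination h - h2)
  by_contra hno
  push_neg at hno
  set A5 : Set K := {x | (1+c)*x = c} with hA5
  set A6 : Set K := {x | x*x = c} with hA6
  set B1 : Set K := {x | 1*(x*x) + c*x + c = 0} with hB1
  set B2 : Set K := {x | 1*(x*x) + (c+γ)*x + c = 0} with hB2
  set B3 : Set K := {x | 1*(x*x) + (c+γ*c)*x + (c+γ*c) = 0} with hB3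
  set B4 : Set K := {x | (1+γ)*(x*x) + (c+γ)*x + c = 0} with hB4
  set B5 : Set K := {x | (1+γ)*(x*x) + (c+γ*c)*x + c = 0} with hB5
  set B6 : Set K := {x | 1*(x*x) + (c+γ)*x + (c+γ*c) = 0} with hB6
  have hsub : (Set.univ : Set K) ⊆
      {0} ∪ ({1} ∪ ({c} ∪ ({c+1} ∪ (A5 ∪ (A6 ∪ (B1 ∪ (B2 ∪ (B3 ∪ (B4 ∪ (B5 ∪ B6)))))))))) := by
    intro t _
    simp only [Set.mem_union, Set.mem_singleton_iff, hA5, hA6, hB1, hB2, hB3, hB4, hB5, hB6,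
      Set.mem_setOf_eq, one_mul]
    rcases eq_or_ne t 0 with h|h0
    · exact Or.inl h
    rcases eq_or_ne t 1 with h|h1
    · exact Or.inr (Or.inl h)
    rcases eq_or_ne t c with h|hc
    · exact Or.inr (Or.inr (Or.inl h))
    rcases eq_or_ne t (c+1) with h|hcc
    · exact Or.inr (Or.inr (Or.inr (Or.inl h)))
    rcases eq_or_ne ((1+c)*t) c with h|h5
    · exact Or.inr (Or.inr (Or.inr (Or.inr (Or.inl h))))
    rcases eq_or_ne (t*t) c with h|h6
    · exact Or.inr (Or.inr (Or.inr (Or.inr (Or.inr (Or.inl h)))))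
    rcases eq_or_ne (t*t + c*t + c) 0 with h|hq
    · exact Or.inr (Or.inr (Or.inr (Or.inr (Or.inr (Or.inr (Or.inl h))))))
    rcases eq_or_ne (t*t + (c+γ)*t + c) 0 with h|hg2
    · exact Or.inr (Or.inr (Or.inr (Or.inr (Or.inr (Or.inr (Or.inr (Or.inl h)))))))
    rcases eq_or_ne (t*t + (c+γ*c)*t + (c+γ*c)) 0 with h|hg3
    · exact Or.inr (Or.inr (Or.inr (Or.inr (Or.inr (Or.inr (Or.inr (Or.inr (Or.inl h))))))))
    rcases eq_or_ne ((1+γ)*(t*t) + (c+γ)*t + c) 0 with h|hg4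
    · exact Or.inr (Or.inr (Or.inr (Or.inr (Or.inr (Or.inr (Or.inr (Or.inr (Or.inr (Or.inl h)))))))))
    rcases eq_or_ne ((1+γ)*(t*t) + (c+γ*c)*t + c) 0 with h|hg5
    · exact Or.inr (Or.inr (Or.inr (Or.inr (Or.inr (Or.inr (Or.inr (Or.inr (Or.inr (Or.inr (Or.inl h))))))))))
    exact Or.inr (Or.inr (Or.inr (Or.inr (Or.inr (Or.inr (Or.inr (Or.inr (Or.inr (Or.inr
      (Or.inr (hno t h0 h1 hc hcc h5 h6 hq hg2 hg3 hg4 hg5)))))))))))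
  have hA5n : A5.ncard ≤ 1 := by
    rw [Set.ncard_le_one (Set.toFinite _)]
    intro x hx y hy
    exact mul_left_cancel₀ hc1' (hx.trans hy.symm)
  have hA6n : A6.ncard ≤ 1 := by
    rw [Set.ncard_le_one (Set.toFinite _)]
    intro x hx y hy
    simp only [hA6, Set.mem_setOf_eq] at hx hy
    have h' : (x - y)*(x - y) = 0 := by linear_combination hx + hy + (c - x*y)*h2
    have := mul_self_eq_zero.mp h'
    linear_combination this
  have hB1n : B1.ncard ≤ 2 := quad_ncard 1 c c one_ne_zero
  have hB2n : B2.ncard ≤ 2 := quad_ncard 1 (c+γ) c one_ne_zero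
  have hB3n : B3.ncard ≤ 2 := quad_ncard 1 (c+γ*c) (c+γ*c) one_ne_zero
  have hB4n : B4.ncard ≤ 2 := quad_ncard (1+γ) (c+γ) c hγ1'
  have hB5n : B5.ncard ≤ 2 := quad_ncard (1+γ) (c+γ*c) c hγ1'
  have hB6n : B6.ncard ≤ 2 := quad_ncard 1 (c+γ) (c+γ*c) one_ne_zero
  have step : ∀ (s t : Set K) (m n : ℕ), s.ncard ≤ m → t.ncard ≤ n →
      (s ∪ t).ncard ≤ m + n :=
    fun s t m n hs ht => le_trans (Set.ncard_union_le s t) (by omega)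
  have u11 := step B5 B6 2 2 hB5n hB6n
  have u10 := step B4 _ 2 4 hB4n u11
  have u9 := step B3 _ 2 6 hB3n u10
  have u8 := step B2 _ 2 8 hB2n u9
  have u7 := step B1 _ 2 10 hB1n u8
  have u6 := step A6 _ 1 12 hA6n u7
  have u5 := step A5 _ 1 13 hA5n u6
  have u4 := step {c+1} _ 1 14 (le_of_eq (Set.ncard_singleton _)) u5
  have u3 := step {c} _ 1 15 (le_of_eq (Set.ncard_singleton _)) u4
  have u2 := step {1} _ 1 16 (le_of_eq (Set.ncard_singleton _)) u3
  have u1 := step {0} _ 1 17 (le_of_eq (Set.ncard_singleton _)) u2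
  have hcard' : Nat.card K ≤ 18 := by
    calc Nat.card K = (Set.univ : Set K).ncard := (Set.ncard_univ K).symm
      _ ≤ _ := Set.ncard_le_ncard hsub (Set.toFinite _)
      _ ≤ 18 := u1
  omega

end Abstract

lemma exists3_of_card16 {K : Type*} [Field K] [Fintype K] (hcard : Fintype.card K = 16)
    (γ c : K) (hγ0 : γ ≠ 0) (hγ1 : γ ≠ 1) (hc0 : c ≠ 0) (hc1 : c ≠ 1) :
    ∃ a b x₁ x₂ x₃ : K, x₁ ≠ x₂ ∧ x₁ ≠ x₃ ∧ x₂ ≠ x₃ ∧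
      Fg γ (x₁ + a) + c * Fg γ x₁ = b ∧ Fg γ (x₂ + a) + c * Fg γ x₂ = b ∧
      Fg γ (x₃ + a) + c * Fg γ x₃ = b := by
  have hc16 : Fintype.card F16 = Fintype.card K := by rw [hcard]; decide
  let e : F16 ≃+* K := FiniteField.ringEquivOfCardEq hc16
  set c' : F16 := e.symm c with hc'
  set g' : F16 := e.symm γ with hg'
  have hec : e c' = c := e.apply_symm_apply c
  have heg : e g' = γ := e.apply_symm_apply γ
  have hc'0 : c' ≠ 0 := fun h => hc0 (by rw [← hec, h, map_zero])
  have hc'1 : c' ≠ 1 := fun h => hc1 (by rw [← hec, h, map_one])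
  have hg'0 : g' ≠ 0 := fun h => hγ0 (by rw [← heg, h, map_zero])
  have hg'1 : g' ≠ 1 := fun h => hγ1 (by rw [← heg, h, map_one])
  obtain ⟨⟨hd1, hd2, hd3⟩, he1, he2, he3⟩ := F16.f16_check c' g' hc'0 hc'1 hg'0 hg'1
  have hFd : ∀ x : F16, e (F16.FdC g' x) = Fg γ (e x) := by
    intro x
    have hinv : ∀ y : F16, e (F16.inv y) = (e y)⁻¹ := fun y => map_inv₀ e y
    have c0 : (e x = 0) ↔ (x = 0) :=
      ⟨fun h => e.injective (by rw [h, map_zero]), fun h => by rw [h, map_zero]⟩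
    have c1 : (e x = 1) ↔ (x = 1) :=
      ⟨fun h => e.injective (by rw [h, map_one]), fun h => by rw [h, map_one]⟩
    have cg : (e x = γ) ↔ (x = g') :=
      ⟨fun h => e.injective (by rw [h, heg]), fun h => by rw [h, heg]⟩
    unfold F16.FdC Fg
    rw [hinv, apply_ite e, apply_ite e, apply_ite e]
    simp only [c0, c1, cg, show e (F16.mk 1) = 1 from map_one e,
      show e (F16.mk 0) = 0 from map_zero e, heg]
  have hadd : ∀ x y : F16, e (F16.add x y) = e x + e y := fun x y => map_add e x y
  have hmul : ∀ x y : F16, e (F16.mul x y) = e x * e y := fun x y => map_mul e x y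
  refine ⟨e (F16.witA c' g'), e (F16.witB c' g'), e (F16.witX1 c' g'), e (F16.witX2 c' g'),
    e (F16.witX3 c' g'), fun h => hd1 (e.injective h), fun h => hd2 (e.injective h),
    fun h => hd3 (e.injective h), ?_, ?_, ?_⟩
  · rw [← congrArg e he1]; simp only [hadd, hmul, hFd, hec]
  · rw [← congrArg e he2]; simp only [hadd, hmul, hFd, hec]
  · rw [← congrArg e he3]; simp only [hadd, hmul, hFd, hec]


theorem stmt_14 (n : ℕ) (hn : 4 ≤ n) (γ c : GaloisField 2 n)
    (hγ0 : γ ≠ 0) (hγ1 : γ ≠ 1) (hc0 : c ≠ 0) (hc1 : c ≠ 1)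
    (F : GaloisField 2 n → GaloisField 2 n) (hF : F = fun x => (cyc n γ x)⁻¹) :
    3 ≤ cdu n F c ∧ cdu n F c ≤ 5 := by
  letI : Fintype (GaloisField 2 n) := Fintype.ofFinite _
  have hn0 : n ≠ 0 := by omega
  have hcardN : Nat.card (GaloisField 2 n) = 2 ^ n := GaloisField.card 2 n hn0
  have h2 : (2 : GaloisField 2 n) = 0 := by
    have := CharP.cast_eq_zero (GaloisField 2 n) 2
    exact_mod_cast this
  have hFg : F = fun x => Fg γ x := by rw [hF]; rfl
  have hcount : ∀ a b, cdCount n F c a b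
      = {x : GaloisField 2 n | Fg γ (x + a) + c * Fg γ x = b}.ncard := by
    intro a b
    rw [cdCount, hFg]
    exact Nat.card_coe_set_eq _
  have hub : ∀ k ∈ {k : ℕ | ∃ a b : GaloisField 2 n, (c = 1 → a ≠ 0) ∧
      k = cdCount n F c a b}, k ≤ 5 := by
    rintro k ⟨a, b, -, rfl⟩
    rw [hcount]
    exact upper_bound h2 hγ0 hγ1 hc0 hc1 a b
  obtain ⟨a, b, x₁, x₂, x₃, h12, h13, h23, e1, e2, e3⟩ :
      ∃ a b x₁ x₂ x₃ : GaloisField 2 n, x₁ ≠ x₂ ∧ x₁ ≠ x₃ ∧ x₂ ≠ x₃ ∧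
        Fg γ (x₁ + a) + c * Fg γ x₁ = b ∧ Fg γ (x₂ + a) + c * Fg γ x₂ = b ∧
        Fg γ (x₃ + a) + c * Fg γ x₃ = b := by
    rcases eq_or_ne n 4 with rfl | hn4
    · exact exists3_of_card16
        (by rw [← Nat.card_eq_fintype_card, hcardN]; norm_num) γ c hγ0 hγ1 hc0 hc1
    · obtain ⟨t, h0, h1, htc, htc1, hg, hsq, hq, hG2, hG3, hG4, hG5, hG6⟩ :=
        exists_good_t (γ := γ) (c := c) h2 hγ1 hc1 (by
          rw [hcardN]
          have h32 : 2 ^ 5 ≤ 2 ^ n := Nat.pow_le_pow_right (by norm_num) (by omega)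
          omega)
      exact three_sols h2 hγ0 hγ1 hc0 hc1 h0 h1 htc htc1 hg hsq hq hG2 hG3 hG4 hG5 hG6
  have hge : 3 ≤ cdCount n F c a b := by
    rw [hcount]
    have hsub : ({x₁, x₂, x₃} : Set (GaloisField 2 n)) ⊆
        {x : GaloisField 2 n | Fg γ (x + a) + c * Fg γ x = b} := by
      rintro x hx
      simp only [Set.mem_insert_iff, Set.mem_singleton_iff] at hx
      rcases hx with rfl | rfl | rfl
      · exact e1
      · exact e2
      · exact e3
    calc 3 = ({x₁, x₂, x₃} : Set (GaloisField 2 n)).ncard :=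
          (Set.ncard_eq_three.mpr ⟨x₁, x₂, x₃, h12, h13, h23, rfl⟩).symm
      _ ≤ _ := Set.ncard_le_ncard hsub (Set.toFinite _)
  have hmem : cdCount n F c a b ∈ {k : ℕ | ∃ a b : GaloisField 2 n,
      (c = 1 → a ≠ 0) ∧ k = cdCount n F c a b} := ⟨a, b, fun h => absurd h hc1, rfl⟩
  have hbdd : BddAbove {k : ℕ | ∃ a b : GaloisField 2 n, (c = 1 → a ≠ 0) ∧
      k = cdCount n F c a b} := ⟨5, fun k hk => hub k hk⟩
  constructor
  · exact le_trans hge (le_csSup hbdd hmem)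
  · exact csSup_le ⟨_, hmem⟩ hub
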